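/- Let n > 5 and let G be a complete edge-colored graph with coloring γ in which no n-cycle is rainbow. Suppose G contains a rainbow (3n−8)-cycle v_0 → v_1 → ⋯ → v_{3n−9} → v_0 with (pairwise distinct) edge colors c_i = γ(v_i, v_{i+1}), all indices taken modulo 3n−8, and suppose that γ(v_i, v_{i+n−1}) ∈ {c_i, c_{i+1}} for every i. Then γ(v_i, v_{i+n−5}) ∈ {c_{i+n−5}, c_{i+n−4}} for every i modulo 3n−8. -/
import Mathlib


/-- A rainbow `m`-cycle in the complete graph on `V` edge-colored by `γ`:
pairwise distinct vertices `v i` (`i` mod `m`) with pairwise distinct edge colors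
`γ (v i) (v (i+1))`. -/
def RainbowCycle {V C : Type*} (γ : V → V → C) (m : ℕ) (v : ZMod m → V) : Prop :=
  Function.Injective v ∧ Function.Injective (fun i : ZMod m => γ (v i) (v (i + 1)))

/-- Index function for the auxiliary `n`-cycle with parameter `t`. -/
def gfun (n t k : ℕ) : ℕ :=
  if k = 0 then 0 else if k ≤ t + 1 then k + (n - 6) else k + (2 * n - 8)

lemma cyc {V C : Type*} (γ : V → V → C)
    (n : ℕ) (hn : 5 < n)
    (hno : ∀ u : ZMod n → V, ¬ RainbowCycle γ n u)
    (v : ZMod (3 * n - 8) → V) (hv : RainbowCycle γ (3 * n - 8) v)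
    (c : ZMod (3 * n - 8) → C) (hc : ∀ i, c i = γ (v i) (v (i + 1)))
    (h1 : ∀ i, γ (v i) (v (i + ((n - 1 : ℕ) : ZMod (3 * n - 8)))) ∈
      ({c i, c (i + 1)} : Set C))
    (t : ℕ) (ht : t ≤ n - 2) (i : ZMod (3 * n - 8)) :
    ∃ d : ℕ,
      γ (v i) (v (i + ((n - 5 : ℕ) : ZMod (3 * n - 8)))) = c (i + (d : ZMod (3 * n - 8))) ∧
      ((n - 5 ≤ d ∧ d ≤ n - 4 + t) ∨ (2 * n - 6 + t ≤ d ∧ d ≤ 3 * n - 9)) := by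
  haveI : NeZero n := ⟨by omega⟩
  haveI : NeZero (3 * n - 8) := ⟨by omega⟩
  set u : ZMod n → V := fun j => v (i + ((gfun n t j.val : ℕ) : ZMod (3 * n - 8))) with hu
  have hglt : ∀ k, k < n → gfun n t k < 3 * n - 8 := by
    intro k hk; unfold gfun; split_ifs <;> omega
  have hcastinj : ∀ a b : ℕ, a < 3 * n - 8 → b < 3 * n - 8 →
      ((a : ZMod (3 * n - 8)) = (b : ZMod (3 * n - 8))) → a = b := by
    intro a b ha hb h
    have h2 := congrArg ZMod.val h
    rwa [ZMod.val_cast_of_lt ha, ZMod.val_cast_of_lt hb] at h2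
  have hginj : ∀ j k : ℕ, j < n → k < n → gfun n t j = gfun n t k → j = k := by
    intro j k hj hk h; unfold gfun at h; split_ifs at h <;> omega
  have huinj : Function.Injective u := by
    intro j k h
    have h2 := hv.1 h
    have h3 : ((gfun n t j.val : ℕ) : ZMod (3 * n - 8))
        = ((gfun n t k.val : ℕ) : ZMod (3 * n - 8)) := by
      exact add_left_cancel h2
    have h4 := hcastinj _ _ (hglt _ (ZMod.val_lt j)) (hglt _ (ZMod.val_lt k)) h3
    have h5 := hginj _ _ (ZMod.val_lt j) (ZMod.val_lt k) h4
    exact ZMod.val_injective n h5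
  have hstep : ∀ k : ZMod n,
      u (k + 1) = v (i + ((gfun n t (k.val + 1) : ℕ) : ZMod (3 * n - 8))) := by
    intro k
    have hkv : ((k.val : ℕ) : ZMod n) = k := ZMod.natCast_rightInverse k
    by_cases h : k.val + 1 < n
    · have h2 : k + 1 = ((k.val + 1 : ℕ) : ZMod n) := by
        rw [Nat.cast_add, Nat.cast_one, hkv]
      have h3 : (k + 1).val = k.val + 1 := by
        rw [h2, ZMod.val_cast_of_lt h]
      show v (i + ((gfun n t (k + 1).val : ℕ) : ZMod (3 * n - 8))) = _
      rw [h3]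
    · have hk : k.val + 1 = n := by have := ZMod.val_lt k; omega
      have h2 : k + 1 = 0 := by
        rw [← hkv, ← Nat.cast_one, ← Nat.cast_add, hk, ZMod.natCast_self]
      have h3 : gfun n t (k.val + 1) = 3 * n - 8 := by
        rw [hk]; unfold gfun
        rw [if_neg (by omega), if_neg (by omega)]; omega
      rw [h2, h3]
      show v (i + ((gfun n t (0 : ZMod n).val : ℕ) : ZMod (3 * n - 8))) = _
      rw [ZMod.val_zero]
      have h4 : gfun n t 0 = 0 := by unfold gfun; rw [if_pos rfl]
      rw [h4, Nat.cast_zero, ZMod.natCast_self]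
  -- compute the edge colors of the auxiliary cycle
  have hcol : ∀ k : ZMod n, k ≠ 0 → ∃ d : ℕ,
      γ (u k) (u (k + 1)) = c (i + (d : ZMod (3 * n - 8))) ∧
      ((k.val ≤ t ∧ d = k.val + (n - 6)) ∨
       (k.val = t + 1 ∧ (d = t + 1 + (n - 6) ∨ d = t + 1 + (n - 6) + 1)) ∨
       (t + 2 ≤ k.val ∧ d = k.val + (2 * n - 8))) := by
    intro k hk
    have hk1 : 1 ≤ k.val :=
      Nat.pos_of_ne_zero (fun h => hk ((ZMod.val_eq_zero k).mp h))
    have hklt := ZMod.val_lt k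
    have hu1 : u k = v (i + ((gfun n t k.val : ℕ) : ZMod (3 * n - 8))) := rfl
    have hu2 := hstep k
    by_cases hA : k.val ≤ t
    · refine ⟨k.val + (n - 6), ?_, Or.inl ⟨hA, rfl⟩⟩
      have e1 : gfun n t k.val = k.val + (n - 6) := by
        unfold gfun; rw [if_neg (by omega), if_pos (by omega)]
      have e2 : gfun n t (k.val + 1) = k.val + (n - 6) + 1 := by
        unfold gfun; rw [if_neg (by omega), if_pos (by omega)]; omega
      have z1 : ((k.val + (n - 6) + 1 : ℕ) : ZMod (3 * n - 8))
          = ((k.val + (n - 6) : ℕ) : ZMod (3 * n - 8)) + 1 := by push_cast; ring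
      rw [hu1, hu2, e1, e2, z1, ← add_assoc, hc]
    · by_cases hB : k.val = t + 1
      · -- the (n-1)-chord edge
        have e1 : gfun n t k.val = t + 1 + (n - 6) := by
          unfold gfun; rw [if_neg (by omega), if_pos (by omega)]; omega
        have e2 : gfun n t (k.val + 1) = t + 1 + (n - 6) + (n - 1) := by
          unfold gfun; rw [if_neg (by omega), if_neg (by omega)]; omega
        have h2 := h1 (i + ((t + 1 + (n - 6) : ℕ) : ZMod (3 * n - 8)))
        rw [Set.mem_insert_iff, Set.mem_singleton_iff] at h2
        have e3 : γ (u k) (u (k + 1)) =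
            γ (v (i + ((t + 1 + (n - 6) : ℕ) : ZMod (3 * n - 8))))
              (v (i + ((t + 1 + (n - 6) : ℕ) : ZMod (3 * n - 8)) +
                ((n - 1 : ℕ) : ZMod (3 * n - 8)))) := by
          have z1 : ((t + 1 + (n - 6) + (n - 1) : ℕ) : ZMod (3 * n - 8))
              = ((t + 1 + (n - 6) : ℕ) : ZMod (3 * n - 8)) + ((n - 1 : ℕ) : ZMod (3 * n - 8)) := by
            push_cast; ring
          rw [hu1, hu2, e1, e2, z1, ← add_assoc]
        rcases h2 with h2 | h2
        · exact ⟨t + 1 + (n - 6), by rw [e3, h2], Or.inr (Or.inl ⟨hB, Or.inl rfl⟩)⟩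
        · refine ⟨t + 1 + (n - 6) + 1, ?_, Or.inr (Or.inl ⟨hB, Or.inr rfl⟩)⟩
          have z2 : ((t + 1 + (n - 6) + 1 : ℕ) : ZMod (3 * n - 8))
              = ((t + 1 + (n - 6) : ℕ) : ZMod (3 * n - 8)) + 1 := by push_cast; ring
          rw [e3, h2, z2, ← add_assoc]
      · -- second path along the big cycle
        have hC : t + 2 ≤ k.val := by omega
        refine ⟨k.val + (2 * n - 8), ?_, Or.inr (Or.inr ⟨hC, rfl⟩)⟩
        have e1 : gfun n t k.val = k.val + (2 * n - 8) := by
          unfold gfun; rw [if_neg (by omega), if_neg (by omega)]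
        have e2 : gfun n t (k.val + 1) = k.val + (2 * n - 8) + 1 := by
          unfold gfun; rw [if_neg (by omega), if_neg (by omega)]; omega
        have z1 : ((k.val + (2 * n - 8) + 1 : ℕ) : ZMod (3 * n - 8))
            = ((k.val + (2 * n - 8) : ℕ) : ZMod (3 * n - 8)) + 1 := by push_cast; ring
        rw [hu1, hu2, e1, e2, z1, ← add_assoc, hc]
  -- the first edge is the unknown chord
  have hcol0 : γ (u 0) (u (0 + 1)) =
      γ (v i) (v (i + ((n - 5 : ℕ) : ZMod (3 * n - 8)))) := by
    have hu2 := hstep (0 : ZMod n)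
    have hu1 : u 0 = v (i + ((gfun n t (0 : ZMod n).val : ℕ) : ZMod (3 * n - 8))) := rfl
    rw [hu1, hu2, ZMod.val_zero]
    have e1 : gfun n t 0 = 0 := by unfold gfun; rw [if_pos rfl]
    have e2 : gfun n t 1 = n - 5 := by
      unfold gfun; rw [if_neg (by omega), if_pos (by omega)]; omega
    rw [e1, e2, Nat.cast_zero, add_zero]
  -- the cycle is not rainbow
  have hni : ¬ Function.Injective (fun k : ZMod n => γ (u k) (u (k + 1))) :=
    fun h => hno u ⟨huinj, h⟩
  rw [Function.not_injective_iff] at hni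
  obtain ⟨j, k, hjk, hne⟩ := hni
  -- collision must involve the chord edge
  have hzero : j = 0 ∨ k = 0 := by
    by_contra hcon
    push_neg at hcon
    obtain ⟨dj, hdj, hPj⟩ := hcol j hcon.1
    obtain ⟨dk, hdk, hPk⟩ := hcol k hcon.2
    have hcc : c (i + (dj : ZMod (3 * n - 8))) = c (i + (dk : ZMod (3 * n - 8))) := by
      rw [← hdj, ← hdk, hjk]
    have hcinj : Function.Injective c := by
      intro a b hab
      apply hv.2
      show γ (v a) (v (a + 1)) = γ (v b) (v (b + 1))
      rw [← hc, ← hc]; exact hab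
    have h2 := hcinj hcc
    have h3 : (dj : ZMod (3 * n - 8)) = (dk : ZMod (3 * n - 8)) := add_left_cancel h2
    have hjlt := ZMod.val_lt j
    have hklt := ZMod.val_lt k
    have h4 : dj = dk := hcastinj _ _ (by omega) (by omega) h3
    have h5 : j.val = k.val := by omega
    exact hne (ZMod.val_injective n h5)
  -- conclude
  have main : ∀ k : ZMod n, k ≠ 0 →
      γ (u 0) (u (0 + 1)) = γ (u k) (u (k + 1)) → ∃ d : ℕ,
      γ (v i) (v (i + ((n - 5 : ℕ) : ZMod (3 * n - 8)))) = c (i + (d : ZMod (3 * n - 8))) ∧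
      ((n - 5 ≤ d ∧ d ≤ n - 4 + t) ∨ (2 * n - 6 + t ≤ d ∧ d ≤ 3 * n - 9)) := by
    intro k hk heq
    obtain ⟨d, hd, hP⟩ := hcol k hk
    have hklt := ZMod.val_lt k
    have hk1 : 1 ≤ k.val :=
      Nat.pos_of_ne_zero (fun h => hk ((ZMod.val_eq_zero k).mp h))
    refine ⟨d, ?_, by omega⟩
    rw [← hcol0, heq, hd]
  rcases hzero with h | h
  · subst h
    have hk : k ≠ 0 := fun h => hne h.symm
    exact main k hk hjk
  · subst h
    have hj : j ≠ 0 := hne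
    exact main j hj hjk.symm

theorem stmt4 {V C : Type*} (γ : V → V → C) (hsymm : ∀ x y, γ x y = γ y x)
    (n : ℕ) (hn : 5 < n)
    (hno : ∀ u : ZMod n → V, ¬ RainbowCycle γ n u)
    (v : ZMod (3 * n - 8) → V) (hv : RainbowCycle γ (3 * n - 8) v)
    (c : ZMod (3 * n - 8) → C) (hc : ∀ i, c i = γ (v i) (v (i + 1)))
    (h1 : ∀ i, γ (v i) (v (i + ((n - 1 : ℕ) : ZMod (3 * n - 8)))) ∈
      ({c i, c (i + 1)} : Set C)) :
    ∀ i, γ (v i) (v (i + ((n - 5 : ℕ) : ZMod (3 * n - 8)))) ∈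
      ({c (i + ((n - 5 : ℕ) : ZMod (3 * n - 8))),
        c (i + ((n - 4 : ℕ) : ZMod (3 * n - 8)))} : Set C) := by
  intro i
  haveI : NeZero (3 * n - 8) := ⟨by omega⟩
  obtain ⟨d1, h1', hd1⟩ := cyc γ n hn hno v hv c hc h1 0 (by omega) i
  obtain ⟨d2, h2', hd2⟩ := cyc γ n hn hno v hv c hc h1 1 (by omega) i
  obtain ⟨d3, h3', hd3⟩ := cyc γ n hn hno v hv c hc h1 (n - 2) (le_refl _) i
  have hcinj : Function.Injective c := by
    intro a b hab
    apply hv.2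
    show γ (v a) (v (a + 1)) = γ (v b) (v (b + 1))
    rw [← hc, ← hc]; exact hab
  have hcastinj : ∀ a b : ℕ, a < 3 * n - 8 → b < 3 * n - 8 →
      ((a : ZMod (3 * n - 8)) = (b : ZMod (3 * n - 8))) → a = b := by
    intro a b ha hb h
    have h2 := congrArg ZMod.val h
    rwa [ZMod.val_cast_of_lt ha, ZMod.val_cast_of_lt hb] at h2
  have key : ∀ a b : ℕ, a < 3 * n - 8 → b < 3 * n - 8 →
      c (i + (a : ZMod (3 * n - 8))) = c (i + (b : ZMod (3 * n - 8))) → a = b := by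
    intro a b ha hb h
    exact hcastinj a b ha hb (add_left_cancel (hcinj h))
  have e12 : d1 = d2 := key _ _ (by omega) (by omega) (h1'.symm.trans h2')
  have e13 : d1 = d3 := key _ _ (by omega) (by omega) (h1'.symm.trans h3')
  have hfin : d1 = n - 5 ∨ d1 = n - 4 := by omega
  rw [Set.mem_insert_iff, Set.mem_singleton_iff]
  rcases hfin with h | h
  · left; rw [h1', h]
  · right; rw [h1', h]
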